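/- Suppose A = L S U where L and U are invertible n×n matrices over a field, S has rank r, Ŝ M = L^{-1} and W Ŝ = U^{-1}, and P = W S M with S = c Ŝ for a nonzero scalar c. If A is invertible then (1/c²) W S M = A^{-1}. -/

import Mathlib

open Matrix

/-- A weighted permutation matrix: at most one nonzero entry in each row and each column. -/
def IsWeightedPerm {n : ℕ} {F : Type*} [Field F] (S : Matrix (Fin n) (Fin n) F) : Prop :=
  (∀ i j k, S i j ≠ 0 → S i k ≠ 0 → j = k) ∧
  (∀ j i k, S i j ≠ 0 → S k j ≠ 0 → i = k)

/-- The unit mapping `S → S^{→1}`: replace every nonzero entry by `1`. -/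
noncomputable def unitMap {n : ℕ} {F : Type*} [Field F] (S : Matrix (Fin n) (Fin n) F) :
    Matrix (Fin n) (Fin n) F :=
  Matrix.of fun i j => letI := Classical.propDecidable (S i j = 0); if S i j = 0 then 0 else 1

/-- The pseudoinverse `S⁺` of a weighted permutation matrix:
transpose and invert each nonzero entry (in a field, `0⁻¹ = 0`). -/
def pinv {n : ℕ} {F : Type*} [Field F] (S : Matrix (Fin n) (Fin n) F) :
    Matrix (Fin n) (Fin n) F :=
  Matrix.of fun i j => (S j i)⁻¹

/-- `T` is a complement `S̄ = S^{Ext} - S` of `S`: a (0,1)-matrix supported on the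
zero rows × zero columns of `S`, such that the combined pattern of `S` and `T`
has exactly one nonzero entry in each row and each column. -/
def IsComplement {n : ℕ} {F : Type*} [Field F] (S T : Matrix (Fin n) (Fin n) F) : Prop :=
  (∀ i j, T i j = 0 ∨ T i j = 1) ∧
  (∀ i j, T i j ≠ 0 → (∀ k, S i k = 0) ∧ (∀ k, S k j = 0)) ∧
  (∀ i, ∃! j, S i j ≠ 0 ∨ T i j ≠ 0) ∧
  (∀ j, ∃! i, S i j ≠ 0 ∨ T i j ≠ 0)

/-- if `A = L S U` is invertible, `Ŝ M = L⁻¹`, `W Ŝ = U⁻¹` and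
`S = c Ŝ` with `c ≠ 0`, then `(1/c²) W S M = A⁻¹`. -/
theorem inverse_from_LSU {n : ℕ} {F : Type*} [Field F]
    (L U S Shat M W A : Matrix (Fin n) (Fin n) F) (c : F) (r : ℕ)
    (hc : c ≠ 0) (hL : IsUnit L.det) (hU : IsUnit U.det)
    (hrank : S.rank = r)
    (hS : S = c • Shat)
    (hM : Shat * M = L⁻¹) (hW : W * Shat = U⁻¹)
    (hA : A = L * S * U) (hAinv : IsUnit A.det) :
    (c⁻¹) ^ 2 • (W * S * M) = A⁻¹ := by
  refine (Matrix.inv_eq_right_inv ?_).symm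
  subst hS hA
  calc L * (c • Shat) * U * ((c⁻¹) ^ 2 • (W * (c • Shat) * M))
      = (c * ((c⁻¹)^2 * c)) • (L * Shat * (U * (W * Shat)) * M) := by
        simp only [Matrix.mul_smul, Matrix.smul_mul, smul_smul, Matrix.mul_assoc]; ring_nf
    _ = L * Shat * (U * (W * Shat)) * M := by
        rw [pow_two]; field_simp; exact one_smul _ _
    _ = 1 := by rw [hW, Matrix.mul_nonsing_inv _ hU, Matrix.mul_one, Matrix.mul_assoc, hM,
        Matrix.mul_nonsing_inv _ hL]
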